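/- Let $b, s, k$ be positive integers and set $D = (4bs-1)^{2k} + (b(4bs-1)^{2k} - s)^2$. Then $D$ is a positive non-square integer and the fundamental period of the regular continued fraction expansion of $\sqrt{D}$ has length $6k + 1$. -/
import Mathlib


/-- The Gauss-map iterates of `x`: `cfX x 0 = x` and
`cfX x (n+1) = 1 / (cfX x n - ⌊cfX x n⌋)`. -/
noncomputable def cfX (x : ℝ) : ℕ → ℝ
  | 0 => x
  | n + 1 => (cfX x n - ⌊cfX x n⌋)⁻¹

/-- The `n`-th partial quotient of the regular continued fraction of `x`. -/
noncomputable def cfA (x : ℝ) (n : ℕ) : ℤ := ⌊cfX x n⌋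

/-- `p` is a period (from index `1` on) of the continued fraction expansion of `x`. -/
def cfPeriod (x : ℝ) (p : ℕ) : Prop :=
  0 < p ∧ ∀ n, 1 ≤ n → cfA x (n + p) = cfA x n

set_option maxHeartbeats 1000000

lemma cfX_succ (x : ℝ) (n : ℕ) : cfX x (n+1) = (cfX x n - (⌊cfX x n⌋ : ℝ))⁻¹ := by
  rw [cfX]

lemma one_le_powZ {N : ℤ} (h : 1 ≤ N) (n : ℕ) : 1 ≤ N ^ n := by
  induction n with
  | zero => simp
  | succ n ih => rw [pow_succ]; nlinarith

lemma pow_monoZ {N : ℤ} (h : 1 ≤ N) {a c : ℕ} (hac : a ≤ c) : N ^ a ≤ N ^ c := by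
  obtain ⟨d, rfl⟩ := Nat.exists_eq_add_of_le hac
  rw [pow_add]
  nlinarith [one_le_powZ h a, one_le_powZ h d]

lemma cf_step' (x : ℝ) (n : ℕ) {D P Q P' Q' a A0 : ℤ}
    (hx : cfX x n = ((P : ℝ) + Real.sqrt (D : ℝ)) / (Q : ℝ))
    (hD : 0 ≤ D) (hQ : 0 < Q) (hQ' : 0 < Q')
    (hP' : P' = a * Q - P) (hQQ' : Q * Q' = D - P' ^ 2)
    (h1 : P' ≤ A0) (h2 : A0 + 1 ≤ (a + 1) * Q - P)
    (hlow : (A0 : ℝ) < Real.sqrt (D : ℝ)) (hhigh : Real.sqrt (D : ℝ) < (A0 : ℝ) + 1) :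
    cfA x n = a ∧ cfX x (n + 1) = ((P' : ℝ) + Real.sqrt (D : ℝ)) / (Q' : ℝ) := by
  set r := Real.sqrt (D : ℝ) with hr
  have hr2 : r ^ 2 = (D : ℝ) := Real.sq_sqrt (by exact_mod_cast hD)
  have hQR : (0:ℝ) < (Q:ℝ) := by exact_mod_cast hQ
  have hQ'R : (0:ℝ) < (Q':ℝ) := by exact_mod_cast hQ'
  have hP'R : (P':ℝ) = (a:ℝ) * (Q:ℝ) - (P:ℝ) := by exact_mod_cast hP'
  have hP'lt : (P':ℝ) < r := lt_of_le_of_lt (by exact_mod_cast h1) hlow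
  have h2R : (A0:ℝ) + 1 ≤ ((a:ℝ) + 1) * (Q:ℝ) - (P:ℝ) := by exact_mod_cast h2
  have hfloor : ⌊cfX x n⌋ = a := by
    rw [hx, Int.floor_eq_iff]
    constructor
    · rw [le_div_iff₀ hQR]
      linarith
    · rw [div_lt_iff₀ hQR]
      linarith
  refine ⟨hfloor, ?_⟩
  rw [cfX_succ, hfloor, hx]
  have hsub : ((P:ℝ) + r)/(Q:ℝ) - (a:ℝ) = (r - (P':ℝ))/(Q:ℝ) := by
    rw [hP'R]; field_simp; ring
  rw [hsub, inv_div]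
  have hQQ'R : (Q:ℝ) * (Q':ℝ) = (D:ℝ) - (P':ℝ)^2 := by exact_mod_cast hQQ'
  rw [div_eq_div_iff (by intro h; nlinarith : (r - (P':ℝ)) ≠ 0) (by positivity : (Q':ℝ) ≠ 0)]
  linear_combination hQQ'R - hr2

lemma step1 (x : ℝ) (n : ℕ) {b s N A0 D u v : ℤ}
    (hb : 1 ≤ b) (hs : 1 ≤ s) (hN : N = 4*b*s - 1)
    (hNu : N ≤ u) (hv : 1 ≤ v)
    (hA0 : A0 = b*(u*v) - s) (hD : D = u*v + A0^2)
    (hlow : (A0:ℝ) < Real.sqrt (D:ℝ)) (hhigh : Real.sqrt (D:ℝ) < (A0:ℝ) + 1)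
    (hx : cfX x n = ((A0:ℝ) + Real.sqrt (D:ℝ)) / (u:ℝ)) :
    cfA x n = 2*b*v - 1 ∧
    cfX x (n+1) = (((A0 + 2*s - u : ℤ) : ℝ) + Real.sqrt (D:ℝ)) / ((2*A0 + 4*s - u - N*v : ℤ) : ℝ) := by
  subst hN hA0 hD
  have hbs : (1:ℤ) ≤ b*s := by nlinarith
  have hu0 : (0:ℤ) < u := by nlinarith
  have huv : u ≤ u*v := by nlinarith
  have hNvuv : (4*b*s-1)*v ≤ u*v := by nlinarith
  have hbuv : u*v ≤ b*(u*v) := by nlinarith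
  have hx0 : cfX x n = (((b*(u*v) - s : ℤ) : ℝ) + Real.sqrt (((u*v + (b*(u*v) - s)^2 : ℤ)):ℝ)) / ((u:ℤ):ℝ) := hx
  refine cf_step' x n hx0 (by nlinarith [sq_nonneg (b*(u*v) - s)]) hu0 ?_ (by ring) (by ring) ?_ ?_ hlow hhigh
  · nlinarith
  · nlinarith
  · nlinarith

lemma step2 (x : ℝ) (n : ℕ) {b s N A0 D u v : ℤ}
    (hb : 1 ≤ b) (hs : 1 ≤ s) (hN : N = 4*b*s - 1)
    (hNu : N ≤ u) (hv : 1 ≤ v) (h2N : u = N ∨ 2*N ≤ u)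
    (hA0 : A0 = b*(u*v) - s) (hD : D = u*v + A0^2)
    (hlow : (A0:ℝ) < Real.sqrt (D:ℝ)) (hhigh : Real.sqrt (D:ℝ) < (A0:ℝ) + 1)
    (hx : cfX x n = (((A0 + 2*s - u : ℤ) : ℝ) + Real.sqrt (D:ℝ)) / ((2*A0 + 4*s - u - N*v : ℤ) : ℝ)) :
    cfA x n = 1 ∧
    cfX x (n+1) = (((A0 + 2*s - N*v : ℤ) : ℝ) + Real.sqrt (D:ℝ)) / ((N*v : ℤ) : ℝ) := by
  subst hN hA0 hD
  have hbs : (1:ℤ) ≤ b*s := by nlinarith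
  have hu0 : (0:ℤ) < u := by nlinarith
  have huv : u ≤ u*v := by nlinarith
  have hNvuv : (4*b*s-1)*v ≤ u*v := by nlinarith
  have hbuv : u*v ≤ b*(u*v) := by nlinarith
  have hNv : (4*b*s-1) ≤ (4*b*s-1)*v := by nlinarith
  refine cf_step' x n hx (by nlinarith [sq_nonneg (b*(u*v) - s)]) (by nlinarith) (by nlinarith) (by ring) (by ring) (by nlinarith) ?_ hlow hhigh
  -- h2 : A0 + 1 ≤ (1+1)*Q - P
  rcases h2N with h | h
  · subst h
    have e1 : (0:ℤ) ≤ (b-1) * ((4*b*s-1)*v - 2*s) := by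
      apply mul_nonneg (by linarith)
      nlinarith
    nlinarith [e1]
  · have t1 : (0:ℤ) ≤ u*(v-1) := mul_nonneg (by linarith) (by linarith)
    have t2 : (0:ℤ) ≤ v*(u - 2*(4*b*s-1)) := mul_nonneg (by linarith) (by linarith)
    have t3 : (0:ℤ) ≤ (b-1)*(u*v - 2*s) := by
      apply mul_nonneg (by linarith)
      nlinarith
    nlinarith [t1, t2, t3]

lemma step3 (x : ℝ) (n : ℕ) {b s A0 D t w : ℤ}
    (hb : 1 ≤ b) (hs : 1 ≤ s) (ht : 1 ≤ t) (hw : 1 ≤ w)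
    (hA0 : A0 = b*(t*w) - s) (hD : D = t*w + A0^2)
    (hlow : (A0:ℝ) < Real.sqrt (D:ℝ)) (hhigh : Real.sqrt (D:ℝ) < (A0:ℝ) + 1)
    (hx : cfX x n = (((A0 + 2*s - w : ℤ) : ℝ) + Real.sqrt (D:ℝ)) / ((w : ℤ):ℝ)) :
    cfA x n = 2*b*t - 1 ∧
    cfX x (n+1) = ((A0:ℝ) + Real.sqrt (D:ℝ)) / ((t:ℤ):ℝ) := by
  subst hA0 hD
  have htw : (1:ℤ) ≤ t*w := by nlinarith
  have hx0 : cfX x n = ((((b*(t*w) - s) + 2*s - w : ℤ) : ℝ) + Real.sqrt (((t*w + (b*(t*w) - s)^2 : ℤ)):ℝ)) / ((w:ℤ):ℝ) := hx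
  have hc := cf_step' x n (a := 2*b*t - 1) (P' := b*(t*w) - s) (Q' := t) hx0
    (by nlinarith [sq_nonneg (b*(t*w) - s)]) (by linarith) (by linarith)
    (by ring) (by ring) (le_refl _) (by nlinarith) hlow hhigh
  exact hc
/-- Corollary c6: for `D = (4bs-1)^{2k} + (b(4bs-1)^{2k} - s)^2`,
`D` is a positive non-square integer and the fundamental period of the
continued fraction of `√D` has length `6k + 1`. -/
theorem period_c6 (b s k : ℕ) (hb : 0 < b) (hs : 0 < s) (hk : 0 < k) :
    let D : ℤ := (4 * (b : ℤ) * s - 1) ^ (2 * k) +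
      ((b : ℤ) * (4 * (b : ℤ) * s - 1) ^ (2 * k) - s) ^ 2
    0 < D ∧ ¬ IsSquare D ∧
      IsLeast {p : ℕ | cfPeriod (Real.sqrt (D : ℝ)) p} (6 * k + 1) := by
  intro D
  have hb' : (1:ℤ) ≤ (b:ℤ) := by exact_mod_cast hb
  have hs' : (1:ℤ) ≤ (s:ℤ) := by exact_mod_cast hs
  obtain ⟨N, hNdef⟩ : ∃ N : ℤ, N = 4*(b:ℤ)*s - 1 := ⟨_, rfl⟩
  obtain ⟨A0, hA0⟩ : ∃ A0 : ℤ, A0 = (b:ℤ)*N^(2*k) - s := ⟨_, rfl⟩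
  have hDval : D = N^(2*k) + A0^2 := by rw [hA0, hNdef]
  clear_value D
  have hN3 : (3:ℤ) ≤ N := by rw [hNdef]; nlinarith
  have hN1 : (1:ℤ) ≤ N := by linarith
  have hN2s : 2*(s:ℤ) + 1 ≤ N := by rw [hNdef]; nlinarith
  have hpow1 : ∀ m : ℕ, (1:ℤ) ≤ N ^ m := fun m => one_le_powZ hN1 m
  have hpowm : ∀ {a c : ℕ}, a ≤ c → N ^ a ≤ N ^ c := fun h => pow_monoZ hN1 h
  have hXN : N ≤ N ^ (2*k) := by
    calc N = N ^ 1 := (pow_one N).symm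
    _ ≤ N ^ (2*k) := hpowm (by omega)
  have hA0ge : (s:ℤ) + 1 ≤ A0 := by
    rw [hA0]
    nlinarith [hXN, hpow1 (2*k)]
  have hDpos : 0 < D := by
    rw [hDval]; nlinarith [hpow1 (2*k), sq_nonneg A0]
  have hD0 : (0:ℤ) ≤ D := le_of_lt hDpos
  have hsq1 : A0^2 < D := by rw [hDval]; nlinarith [hpow1 (2*k)]
  have hsq2 : D < (A0+1)^2 := by
    rw [hDval, hA0]
    nlinarith [hXN, hpow1 (2*k)]
  have hlow : ((A0:ℤ):ℝ) < Real.sqrt (D:ℝ) := by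
    refine (Real.lt_sqrt ?_).mpr ?_
    · have h0 : (0:ℤ) ≤ A0 := by linarith
      exact_mod_cast h0
    · exact_mod_cast hsq1
  have hhigh : Real.sqrt (D:ℝ) < ((A0:ℤ):ℝ) + 1 := by
    refine (Real.sqrt_lt' ?_).mpr ?_
    · have h0 : (0:ℤ) < A0 + 1 := by linarith
      exact_mod_cast h0
    · exact_mod_cast hsq2
  -- base : cfX x 1
  have hx0 : cfX (Real.sqrt (D:ℝ)) 0 = (((0:ℤ):ℝ) + Real.sqrt (D:ℝ)) / ((1:ℤ):ℝ) := by
    simp [cfX]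
  have base := cf_step' (Real.sqrt (D:ℝ)) 0 (a := A0) (P' := A0) (Q' := N^(2*k)) hx0 hD0
    (by norm_num) (by positivity) (by ring) (by rw [hDval]; ring) (le_refl _) (by linarith)
    hlow hhigh
  have base1 : cfX (Real.sqrt (D:ℝ)) 1 = ((A0:ℝ) + Real.sqrt (D:ℝ)) / ((N^(2*k) : ℤ):ℝ) := base.2
  -- the block lemma
  have block : ∀ j : ℕ, j < 2*k →
      cfX (Real.sqrt (D:ℝ)) (3*j+1) = ((A0:ℝ) + Real.sqrt (D:ℝ)) / ((N^(2*k-j) : ℤ):ℝ) →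
      (cfA (Real.sqrt (D:ℝ)) (3*j+1) = 2*b*N^j - 1 ∧ cfA (Real.sqrt (D:ℝ)) (3*j+2) = 1 ∧
       cfA (Real.sqrt (D:ℝ)) (3*j+3) = 2*b*N^(2*k-1-j) - 1 ∧
       cfX (Real.sqrt (D:ℝ)) (3*j+4) = ((A0:ℝ) + Real.sqrt (D:ℝ)) / ((N^(2*k-(j+1)) : ℤ):ℝ)) := by
    intro j hj hx1
    have hmul : N^(2*k-j) * N^j = N^(2*k) := by rw [← pow_add]; congr 1; omega
    have hmul2 : N^(2*k-1-j) * (N * N^j) = N^(2*k) := by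
      rw [show N * N^j = N^(j+1) from (pow_succ' N j).symm, ← pow_add]; congr 1; omega
    have hA0uv : A0 = (b:ℤ) * (N^(2*k-j) * N^j) - s := by rw [hmul, hA0]
    have hDuv : D = N^(2*k-j) * N^j + A0^2 := by rw [hmul, hDval]
    have hA0tw : A0 = (b:ℤ) * (N^(2*k-1-j) * (N * N^j)) - s := by rw [hmul2, hA0]
    have hDtw : D = N^(2*k-1-j) * (N * N^j) + A0^2 := by rw [hmul2, hDval]
    have hNu : N ≤ N^(2*k-j) := by
      calc N = N ^ 1 := (pow_one N).symm
      _ ≤ N^(2*k-j) := hpowm (by omega)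
    have h2N : N^(2*k-j) = N ∨ 2*N ≤ N^(2*k-j) := by
      rcases Nat.lt_or_ge (2*k-j) 2 with h | h
      · left
        have : 2*k-j = 1 := by omega
        rw [this, pow_one]
      · right
        have : N^2 ≤ N^(2*k-j) := hpowm h
        nlinarith
    obtain ⟨hA1, hx2⟩ := step1 (Real.sqrt (D:ℝ)) (3*j+1) hb' hs' hNdef hNu (hpow1 j) hA0uv hDuv hlow hhigh hx1
    obtain ⟨hA2, hx3⟩ := step2 (Real.sqrt (D:ℝ)) (3*j+1+1) hb' hs' hNdef hNu (hpow1 j) h2N hA0uv hDuv hlow hhigh hx2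
    obtain ⟨hA3, hx4⟩ := step3 (Real.sqrt (D:ℝ)) (3*j+1+1+1) hb' hs' (hpow1 (2*k-1-j))
      (by nlinarith [hpow1 j] : (1:ℤ) ≤ N * N^j) hA0tw hDtw hlow hhigh hx3
    refine ⟨hA1, hA2, hA3, ?_⟩
    have e4 : (3:ℕ)*j+4 = 3*j+1+1+1+1 := by omega
    rw [e4]
    have he : (2:ℕ)*k-1-j = 2*k-(j+1) := by omega
    rw [← he]
    exact hx4
  -- key invariant
  have key : ∀ j : ℕ, j ≤ 2*k →
      cfX (Real.sqrt (D:ℝ)) (3*j+1) = ((A0:ℝ) + Real.sqrt (D:ℝ)) / ((N^(2*k-j) : ℤ):ℝ) := by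
    intro j
    induction j with
    | zero => intro _; simpa using base1
    | succ j ih =>
      intro hj
      have h4 := (block j (by omega) (ih (by omega))).2.2.2
      have e : (3:ℕ)*(j+1)+1 = 3*j+4 := by omega
      rw [e]
      exact h4
  -- value at 6k+1 and periodic return
  have hkey2k := key (2*k) (le_refl _)
  have hx6k1 : cfX (Real.sqrt (D:ℝ)) (6*k+1) = ((A0:ℝ) + Real.sqrt (D:ℝ)) / ((1:ℤ):ℝ) := by
    have e : (3:ℕ)*(2*k)+1 = 6*k+1 := by omega
    rw [e] at hkey2k
    rw [hkey2k]
    norm_num [show (2:ℕ)*k - 2*k = 0 from by omega]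
  have hend := cf_step' (Real.sqrt (D:ℝ)) (6*k+1) (a := 2*A0) (P' := A0) (Q' := N^(2*k)) hx6k1 hD0
    (by norm_num) (by positivity) (by ring) (by rw [hDval]; ring) (le_refl _) (by linarith)
    hlow hhigh
  have hA6k1 : cfA (Real.sqrt (D:ℝ)) (6*k+1) = 2*A0 := hend.1
  have hx6k2 : cfX (Real.sqrt (D:ℝ)) (6*k+2) = cfX (Real.sqrt (D:ℝ)) 1 := by
    rw [base1]
    exact hend.2
  -- full periodicity of cfX from index 1
  have hcfx : ∀ m : ℕ, cfX (Real.sqrt (D:ℝ)) (6*k+2+m) = cfX (Real.sqrt (D:ℝ)) (1+m) := by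
    intro m
    induction m with
    | zero => simpa using hx6k2
    | succ m ih =>
      have e1 : (6:ℕ)*k+2+(m+1) = (6*k+2+m)+1 := by omega
      have e2 : (1:ℕ)+(m+1) = (1+m)+1 := by omega
      rw [e1, e2, cfX_succ, cfX_succ, ih]
  -- bound lemma for minimality
  have hbound : ∀ e : ℕ, e+1 ≤ 2*k → 2*(b:ℤ)*N^e - 1 < 2*A0 := by
    intro e he
    have h1 : N^e * N ≤ N^(2*k) := by
      calc N^e * N = N^(e+1) := (pow_succ N e).symm
      _ ≤ N^(2*k) := hpowm he
    have h2 : (1:ℤ) ≤ N^e := hpow1 e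
    rw [hA0]
    nlinarith [mul_le_mul_of_nonneg_left h1 (show (0:ℤ) ≤ 2*(b:ℤ) by linarith),
      mul_le_mul_of_nonneg_left hN2s (show (0:ℤ) ≤ 2*(b:ℤ)*N^e by nlinarith)]
  have h1lt : (1:ℤ) < 2*A0 := by linarith
  -- all partial quotients in [1, 6k] are < 2*A0
  have hlt : ∀ n : ℕ, 1 ≤ n → n ≤ 6*k → cfA (Real.sqrt (D:ℝ)) n < 2*A0 := by
    intro n h1 h6
    obtain ⟨j, hj⟩ : ∃ j, (n = 3*j+1 ∧ j < 2*k) ∨ (n = 3*j+2 ∧ j < 2*k) ∨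
        (n = 3*j+3 ∧ j < 2*k) := ⟨(n-1)/3, by omega⟩
    rcases hj with ⟨rfl, hjk⟩ | ⟨rfl, hjk⟩ | ⟨rfl, hjk⟩
    · rw [(block j hjk (key j (by omega))).1]
      exact hbound j (by omega)
    · rw [(block j hjk (key j (by omega))).2.1]
      exact h1lt
    · rw [(block j hjk (key j (by omega))).2.2.1]
      exact hbound (2*k-1-j) (by omega)
  -- assemble
  refine ⟨hDpos, ?_, ?_, ?_⟩
  · rintro ⟨t, ht⟩
    rw [ht] at hsq1 hsq2
    have h1 : A0 < |t| := by nlinarith [sq_abs t, abs_nonneg t]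
    have h2 : |t| < A0 + 1 := by nlinarith [sq_abs t, abs_nonneg t]
    omega
  · refine ⟨by omega, ?_⟩
    intro n hn
    obtain ⟨m, rfl⟩ : ∃ m, n = 1 + m := ⟨n - 1, by omega⟩
    show cfA (Real.sqrt (D:ℝ)) (1 + m + (6*k+1)) = cfA (Real.sqrt (D:ℝ)) (1 + m)
    have e : (1:ℕ) + m + (6*k+1) = 6*k+2+m := by omega
    unfold cfA
    rw [e, hcfx m]
  · intro p hp
    by_contra hcon
    push_neg at hcon
    have hp1 : 1 ≤ p := hp.1
    have hper := hp.2 (6*k+1-p) (by omega)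
    have e : 6*k+1-p + p = 6*k+1 := by omega
    rw [e] at hper
    have hlt' := hlt (6*k+1-p) (by omega) (by omega)
    rw [← hper, hA6k1] at hlt'
    omega
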